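/- There exists a real number κ with 0 < κ < 1 such that for all integers m ≥ 2 and r ≥ 1, C(m, ⌊m/2⌋ + r·⌈√m⌉) ≤ κ^r · C(m, ⌊m/2⌋). -/

import Mathlib

open Finset

private lemma descIdent (m a : ℕ) : ∀ j, Nat.choose m (a + j) * ∏ i ∈ range j, (a + 1 + i) =
    Nat.choose m a * ∏ i ∈ range j, (m - (a + i)) := by
  intro j
  induction j with
  | zero => simp
  | succ j ih =>
    rw [prod_range_succ, prod_range_succ, show a + 1 + j = a + j + 1 from by omega,
      show a + (j + 1) = (a + j) + 1 from by omega, ← mul_assoc, mul_right_comm,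
      Nat.choose_succ_right_eq, mul_right_comm, ih, mul_assoc]

private lemma natFact (k : ℕ) (hk : 2 ≤ k) : k ^ 2 + 1 ≤ 36 * ((k - k / 2) * (k / 2)) := by
  obtain ⟨a, b, ha1, hab, hba, h1, h2, h3⟩ : ∃ a b : ℕ, 1 ≤ a ∧ a ≤ b ∧ b ≤ a + 1 ∧
      k / 2 = a ∧ k - k / 2 = b ∧ k = a + b :=
    ⟨k / 2, k - k / 2, by omega, by omega, by omega, rfl, rfl, by omega⟩
  rw [h2, h1, h3]
  nlinarith

private lemma keyPow (c h n : ℕ) (hc : h < c) (hnum : c - h ≤ 18 * (n * h)) :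
    ((c - h : ℕ) : ℝ) ^ n ≤ 9 / 10 * ((c + h : ℕ) : ℝ) ^ n := by
  have hx : (0:ℝ) < ((c - h : ℕ) : ℝ) := by exact_mod_cast Nat.sub_pos_of_lt hc
  have hnum' : ((c - h : ℕ) : ℝ) ≤ 18 * ((n:ℝ) * (h:ℝ)) := by exact_mod_cast hnum
  have ha0 : (0:ℝ) ≤ 2 * (h:ℝ) / ((c - h : ℕ) : ℝ) := by positivity
  have hbern : 1 + (n:ℝ) * (2 * (h:ℝ) / ((c - h : ℕ) : ℝ)) ≤
      (1 + 2 * (h:ℝ) / ((c - h : ℕ) : ℝ)) ^ n := one_add_mul_le_pow (by linarith) n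
  have hna : (1:ℝ)/9 ≤ (n:ℝ) * (2 * (h:ℝ) / ((c - h : ℕ) : ℝ)) := by
    rw [← mul_div_assoc, le_div_iff₀ hx]
    nlinarith
  have hy : ((c + h : ℕ) : ℝ) = ((c - h : ℕ) : ℝ) + 2 * (h:ℝ) := by
    push_cast [Nat.cast_sub hc.le]
    ring
  have hpow : ((c + h : ℕ) : ℝ) ^ n =
      ((c - h : ℕ) : ℝ) ^ n * (1 + 2 * (h:ℝ) / ((c - h : ℕ) : ℝ)) ^ n := by
    rw [← mul_pow, hy]
    congr 1
    field_simp
  have hxn : (0:ℝ) ≤ ((c - h : ℕ) : ℝ) ^ n := by positivity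
  have h2 := mul_le_mul_of_nonneg_left hbern hxn
  rw [← hpow] at h2
  nlinarith

private lemma prodBound (c k : ℕ) (hc : 1 ≤ c) (hk : 2 ≤ k) (hck : 2 * c ≤ k ^ 2 + 1) :
    ((∏ i ∈ range k, (c - i) : ℕ) : ℝ) ≤ 9 / 10 * ((∏ i ∈ range k, (c + i) : ℕ) : ℝ) := by
  set h := k / 2 with hh
  set n := k - k / 2 with hn
  have hkhn : k = h + n := by omega
  by_cases hch : c ≤ h
  · have hz : (∏ i ∈ range k, (c - i) : ℕ) = 0 :=
      prod_eq_zero (mem_range.mpr (by omega : h < k)) (by omega)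
    rw [hz]
    push_cast
    positivity
  · push_neg at hch
    have hfact := natFact k hk
    have hnum : c - h ≤ 18 * (n * h) := by
      rw [hh, hn] at *
      omega
    have hkey := keyPow c h n hch hnum
    rw [hkhn, prod_range_add, prod_range_add, Nat.cast_mul, Nat.cast_mul]
    have hA : ((∏ i ∈ range h, (c - i) : ℕ) : ℝ) ≤ ((∏ i ∈ range h, (c + i) : ℕ) : ℝ) := by
      exact_mod_cast prod_le_prod' fun i _ => by omega
    have hB : ((∏ i ∈ range n, (c - (h + i)) : ℕ) : ℝ) ≤ ((c - h : ℕ) : ℝ) ^ n := by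
      have : (∏ i ∈ range n, (c - (h + i)) : ℕ) ≤ (c - h) ^ n := by
        calc (∏ i ∈ range n, (c - (h + i)) : ℕ) ≤ ∏ _i ∈ range n, (c - h) :=
              prod_le_prod' fun i _ => by omega
          _ = (c - h) ^ n := by rw [prod_const, card_range]
      exact_mod_cast this
    have hC : ((c + h : ℕ) : ℝ) ^ n ≤ ((∏ i ∈ range n, (c + (h + i)) : ℕ) : ℝ) := by
      have : (c + h) ^ n ≤ (∏ i ∈ range n, (c + (h + i)) : ℕ) := by
        calc (c + h) ^ n = ∏ _i ∈ range n, (c + h) := by rw [prod_const, card_range]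
          _ ≤ ∏ i ∈ range n, (c + (h + i)) := prod_le_prod' fun i _ => by omega
      exact_mod_cast this
    have hApos : (0:ℝ) ≤ ((∏ i ∈ range h, (c + i) : ℕ) : ℝ) := by positivity
    have hBpos : (0:ℝ) ≤ ((∏ i ∈ range n, (c - (h + i)) : ℕ) : ℝ) := by positivity
    calc ((∏ i ∈ range h, (c - i) : ℕ) : ℝ) * ((∏ i ∈ range n, (c - (h + i)) : ℕ) : ℝ)
        ≤ ((∏ i ∈ range h, (c + i) : ℕ) : ℝ) * ((c - h : ℕ) : ℝ) ^ n :=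
          mul_le_mul hA hB hBpos hApos
      _ ≤ ((∏ i ∈ range h, (c + i) : ℕ) : ℝ) * (9 / 10 * ((c + h : ℕ) : ℝ) ^ n) :=
          mul_le_mul_of_nonneg_left hkey hApos
      _ ≤ ((∏ i ∈ range h, (c + i) : ℕ) : ℝ)
            * (9 / 10 * ((∏ i ∈ range n, (c + (h + i)) : ℕ) : ℝ)) := by
          apply mul_le_mul_of_nonneg_left _ hApos
          linarith
      _ = 9 / 10 * (((∏ i ∈ range h, (c + i) : ℕ) : ℝ)
            * ((∏ i ∈ range n, (c + (h + i)) : ℕ) : ℝ)) := by ring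

private lemma stepBound (m a : ℕ) (hm : 2 ≤ m) (ha : m / 2 ≤ a) :
    (Nat.choose m (a + ⌈Real.sqrt m⌉₊) : ℝ) ≤ 9 / 10 * Nat.choose m a := by
  set k := ⌈Real.sqrt m⌉₊ with hkdef
  set c := m - m / 2 with hcdef
  have hk2 : 2 ≤ k := by
    have h0 : (1:ℝ) < Real.sqrt m := by
      rw [show (1:ℝ) = Real.sqrt 1 from (Real.sqrt_one).symm]
      apply Real.sqrt_lt_sqrt (by norm_num)
      exact_mod_cast hm.trans_lt' (by norm_num)
    have h1 : (1:ℕ) < ⌈Real.sqrt m⌉₊ := Nat.lt_ceil.mpr (by exact_mod_cast h0)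
    omega
  have hkm : m ≤ k ^ 2 := by
    have h1 : Real.sqrt m ≤ (k : ℝ) := Nat.le_ceil _
    have h2 : (m : ℝ) ≤ (k : ℝ) ^ 2 := by
      have := Real.sq_sqrt (by positivity : (0:ℝ) ≤ (m:ℝ))
      nlinarith [Real.sqrt_nonneg (m:ℝ)]
    exact_mod_cast h2
  have hc1 : 1 ≤ c := by omega
  have hck : 2 * c ≤ k ^ 2 + 1 := by omega
  have hnat : Nat.choose m (a + k) * ∏ i ∈ range k, (c + i) ≤
      Nat.choose m a * ∏ i ∈ range k, (c - i) := by
    calc Nat.choose m (a + k) * ∏ i ∈ range k, (c + i)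
        ≤ Nat.choose m (a + k) * ∏ i ∈ range k, (a + 1 + i) :=
          Nat.mul_le_mul_left _ (prod_le_prod' fun i _ => by omega)
      _ = Nat.choose m a * ∏ i ∈ range k, (m - (a + i)) := descIdent m a k
      _ ≤ Nat.choose m a * ∏ i ∈ range k, (c - i) :=
          Nat.mul_le_mul_left _ (prod_le_prod' fun i _ => by omega)
  have hPB := prodBound c k hc1 hk2 hck
  have hD : (0:ℝ) < ((∏ i ∈ range k, (c + i) : ℕ) : ℝ) := by
    have : 0 < ∏ i ∈ range k, (c + i) := prod_pos fun i _ => by omega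
    exact_mod_cast this
  rw [← mul_le_mul_iff_left₀ hD]
  calc (Nat.choose m (a + k) : ℝ) * ((∏ i ∈ range k, (c + i) : ℕ) : ℝ)
      ≤ (Nat.choose m a : ℝ) * ((∏ i ∈ range k, (c - i) : ℕ) : ℝ) := by exact_mod_cast hnat
    _ ≤ (Nat.choose m a : ℝ) * (9 / 10 * ((∏ i ∈ range k, (c + i) : ℕ) : ℝ)) :=
        mul_le_mul_of_nonneg_left hPB (by positivity)
    _ = 9 / 10 * (Nat.choose m a : ℝ) * ((∏ i ∈ range k, (c + i) : ℕ) : ℝ) := by ring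

theorem stmt_4 : ∃ κ : ℝ, 0 < κ ∧ κ < 1 ∧ ∀ m r : ℕ, 2 ≤ m → 1 ≤ r →
    (Nat.choose m (m / 2 + r * ⌈Real.sqrt m⌉₊) : ℝ) ≤ κ ^ r * Nat.choose m (m / 2) := by
  refine ⟨9/10, by norm_num, by norm_num, ?_⟩
  intro m r hm hr
  clear hr
  induction r with
  | zero => simp
  | succ r ih =>
    have h1 : m / 2 + (r + 1) * ⌈Real.sqrt m⌉₊
        = (m / 2 + r * ⌈Real.sqrt m⌉₊) + ⌈Real.sqrt m⌉₊ := by ring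
    rw [h1]
    calc (Nat.choose m ((m / 2 + r * ⌈Real.sqrt m⌉₊) + ⌈Real.sqrt m⌉₊) : ℝ)
        ≤ 9 / 10 * Nat.choose m (m / 2 + r * ⌈Real.sqrt m⌉₊) :=
          stepBound m _ hm (by omega)
      _ ≤ 9 / 10 * ((9/10) ^ r * Nat.choose m (m / 2)) :=
          mul_le_mul_of_nonneg_left ih (by norm_num)
      _ = (9/10) ^ (r + 1) * Nat.choose m (m / 2) := by ring
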